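/- Let Q be a real symmetric positive semidefinite n×n matrix with ker(Q) = span(1), and let α ⊊ [n] with |α| ≥ 2. Then the Schur complement Q/α^c := Q[α,α] − Q[α,α^c]Q[α^c,α^c]^{−1}Q[α^c,α] is well defined (Q[α^c,α^c] is invertible), symmetric positive semidefinite, and has kernel exactly span(1) in ℝ^{|α|}. -/

import Mathlib

open Matrix

/-- Submatrix of `A` with rows indexed by `α` and columns by `β`. -/
def subm {n : ℕ} (A : Matrix (Fin n) (Fin n) ℝ) (α β : Finset (Fin n)) :
    Matrix {i // i ∈ α} {j // j ∈ β} ℝ :=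
  Matrix.of fun i j => A i.1 j.1

/-- Kron reduction (Schur complement) of `A` onto the node set `α`. -/
noncomputable def schur {n : ℕ} (A : Matrix (Fin n) (Fin n) ℝ) (α : Finset (Fin n)) :
    Matrix {i // i ∈ α} {i // i ∈ α} ℝ :=
  subm A α α - subm A α αᶜ * (subm A αᶜ αᶜ)⁻¹ * subm A αᶜ α

theorem schur_complement_posSemidef_ker_span_ones
    {n : ℕ} (Q : Matrix (Fin n) (Fin n) ℝ)
    (hQ : Q.PosSemidef)
    (hker : ∀ v : Fin n → ℝ, Q.mulVec v = 0 ↔ ∃ c : ℝ, v = fun _ => c)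
    (α : Finset (Fin n)) (hα : 2 ≤ α.card) (hproper : α ≠ Finset.univ) :
    IsUnit (subm Q αᶜ αᶜ).det ∧
    (schur Q α)ᵀ = schur Q α ∧
    (schur Q α).PosSemidef ∧
    (∀ v : {i // i ∈ α} → ℝ,
      (schur Q α).mulVec v = 0 ↔ ∃ c : ℝ, v = fun _ => c) := by
  classical
  set A := subm Q α α with hA
  set B := subm Q α αᶜ with hB
  set C := subm Q αᶜ α with hCdef
  set D := subm Q αᶜ αᶜ with hD
  obtain ⟨i₀, hi₀⟩ : α.Nonempty := Finset.card_pos.mp (by omega)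
  -- Q is symmetric
  have hQsym : ∀ i j, Q i j = Q j i := fun i j => by
    have h2 := congrFun (congrFun hQ.1 j) i
    simpa using h2
  have hCB : C = Bᴴ := by
    ext i j
    simp only [hCdef, hB, subm, conjTranspose_apply, of_apply, star_trivial]
    exact hQsym i.1 j.1
  -- the equivalence between the sum of subtypes and Fin n
  let e : {i // i ∈ α} ⊕ {i // i ∈ αᶜ} ≃ Fin n :=
    (Equiv.sumCongr (Equiv.refl _)
      (Equiv.subtypeEquivRight (fun i => Finset.mem_compl))).trans
      (Equiv.sumCompl (· ∈ α))
  have hM : fromBlocks A B C D = Q.submatrix e e := by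
    ext i j
    cases i <;> cases j <;> rfl
  have hMpsd : (fromBlocks A B C D).PosSemidef := by
    rw [hM]
    exact hQ.submatrix e
  -- kernel characterization of the block matrix
  have hMker : ∀ u : {i // i ∈ α} ⊕ {i // i ∈ αᶜ} → ℝ,
      (fromBlocks A B C D).mulVec u = 0 ↔ ∃ c : ℝ, u = fun _ => c := by
    intro u
    rw [hM, submatrix_mulVec_equiv]
    constructor
    · intro h
      have h' : Q.mulVec (u ∘ e.symm) = 0 := by
        funext i
        have := congrFun h (e.symm i)
        simpa using this
      obtain ⟨c, hc⟩ := (hker _).mp h'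
      refine ⟨c, funext fun x => ?_⟩
      have := congrFun hc (e x)
      simpa using this
    · rintro ⟨c, rfl⟩
      have h' : Q.mulVec ((fun _ => c) ∘ e.symm) = 0 := (hker _).mpr ⟨c, rfl⟩
      funext i
      simpa using congrFun h' (e i)
  -- D is positive definite
  have hDpsd : D.PosSemidef := hQ.submatrix (fun i : {i // i ∈ αᶜ} => i.1)
  have hDpd : D.PosDef := by
    refine PosDef.of_dotProduct_mulVec_pos hDpsd.1 fun x hx => ?_
    rcases lt_or_eq_of_le (hDpsd.dotProduct_mulVec_nonneg x) with h | h
    · exact h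
    exfalso
    -- the extension of x by zero lies in the kernel of the block matrix
    have hq0 : star (Sum.elim (0 : {i // i ∈ α} → ℝ) x) ⬝ᵥ
        (fromBlocks A B C D) *ᵥ (Sum.elim 0 x) = 0 := by
      have h1 : (Sum.elim (0 : {i // i ∈ α} → ℝ) x) ∘ Sum.inl = 0 := rfl
      have h2 : (Sum.elim (0 : {i // i ∈ α} → ℝ) x) ∘ Sum.inr = x := rfl
      rw [star_trivial, fromBlocks_mulVec, h1, h2, mulVec_zero, mulVec_zero,
        zero_add, zero_add, sumElim_dotProduct_sumElim, zero_dotProduct, zero_add]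
      have h3 := h.symm
      simpa using h3
    have hMu : (fromBlocks A B C D).mulVec (Sum.elim 0 x) = 0 :=
      (hMpsd.dotProduct_mulVec_zero_iff _).mp hq0
    obtain ⟨c, hc⟩ := (hMker _).mp hMu
    have hc0 : c = 0 := by
      have := congrFun hc (Sum.inl ⟨i₀, hi₀⟩)
      simpa using this.symm
    apply hx
    funext j
    have := congrFun hc (Sum.inr j)
    simp only [Sum.elim_inr, hc0] at this
    simpa using this
  -- D is invertible
  have hdet : IsUnit D.det := isUnit_iff_ne_zero.mpr (ne_of_gt hDpd.det_pos)
  haveI : Invertible D := D.invertibleOfIsUnitDet hdet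
  have hDinv : D * D⁻¹ = 1 := mul_nonsing_inv D hdet
  have hDinv' : D⁻¹ * D = 1 := nonsing_inv_mul D hdet
  -- symmetry facts
  have hAsym : Aᵀ = A := by
    ext i j
    exact hQsym j.1 i.1
  have hDsym : Dᵀ = D := by
    ext i j
    exact hQsym j.1 i.1
  have hDinvsym : D⁻¹ᵀ = D⁻¹ := by
    rw [transpose_nonsing_inv, hDsym]
  have hCT : Cᵀ = B := by
    ext i j
    exact hQsym j.1 i.1
  have hBT : Bᵀ = C := by
    ext i j
    exact hQsym j.1 i.1
  have hschur : schur Q α = A - B * D⁻¹ * C := rfl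
  -- symmetry of the Schur complement
  have hsym : (schur Q α)ᵀ = schur Q α := by
    rw [hschur, transpose_sub, hAsym, transpose_mul, transpose_mul, hDinvsym, hCT, hBT,
      Matrix.mul_assoc]
  -- positive semidefiniteness
  have hpsd : (schur Q α).PosSemidef := by
    have h := (PosDef.fromBlocks₂₂ A B hDpd).mp (by rwa [← hCB])
    rwa [hschur, hCB]
  refine ⟨hdet, hsym, hpsd, fun v => ?_⟩
  constructor
  · intro hv
    -- extend v by w := -D⁻¹ C v
    set w : {i // i ∈ αᶜ} → ℝ := -(D⁻¹ *ᵥ (C *ᵥ v)) with hw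
    have hDw : D *ᵥ w = -(C *ᵥ v) := by
      rw [hw, mulVec_neg, mulVec_mulVec, hDinv, one_mulVec]
    have hBw : B *ᵥ w = -((B * D⁻¹ * C) *ᵥ v) := by
      rw [hw, mulVec_neg, mulVec_mulVec, mulVec_mulVec]
    have hv' : A *ᵥ v - (B * D⁻¹ * C) *ᵥ v = 0 := by
      rw [← sub_mulVec, ← hschur]; exact hv
    have hAv : A *ᵥ v + B *ᵥ w = 0 := by
      rw [hBw, ← sub_eq_add_neg]; exact hv'
    have hMu : (fromBlocks A B C D).mulVec (Sum.elim v w) = 0 := by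
      rw [fromBlocks_mulVec]
      have h1 : (Sum.elim v w) ∘ Sum.inl = v := rfl
      have h2 : (Sum.elim v w) ∘ Sum.inr = w := rfl
      rw [h1, h2, hDw, hAv]
      funext i
      cases i with
      | inl i => rfl
      | inr i => simp
    obtain ⟨c, hc⟩ := (hMker _).mp hMu
    refine ⟨c, funext fun i => ?_⟩
    have := congrFun hc (Sum.inl i)
    simpa using this
  · rintro ⟨c, rfl⟩
    -- the constant vector is in the kernel of M
    have hMu : (fromBlocks A B C D).mulVec
        (Sum.elim (fun _ : {i // i ∈ α} => c) (fun _ : {i // i ∈ αᶜ} => c)) = 0 := by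
      have : (Sum.elim (fun _ : {i // i ∈ α} => c) (fun _ : {i // i ∈ αᶜ} => c)) =
          fun _ => c := funext fun i => by cases i <;> rfl
      rw [this]
      exact (hMker _).mpr ⟨c, rfl⟩
    rw [fromBlocks_mulVec] at hMu
    have h1 : (Sum.elim (fun _ : {i // i ∈ α} => c) (fun _ : {i // i ∈ αᶜ} => c)) ∘ Sum.inl
        = fun _ => c := rfl
    have h2 : (Sum.elim (fun _ : {i // i ∈ α} => c) (fun _ : {i // i ∈ αᶜ} => c)) ∘ Sum.inr
        = fun _ => c := rfl
    rw [h1, h2] at hMu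
    have htop : A *ᵥ (fun _ => c) + B *ᵥ (fun _ => c) = 0 := by
      funext i
      simpa using congrFun hMu (Sum.inl i)
    have hbot : C *ᵥ (fun _ => c) + D *ᵥ (fun _ => c) = 0 := by
      funext i
      simpa using congrFun hMu (Sum.inr i)
    have hCc : C *ᵥ (fun _ => c) = -(D *ᵥ (fun _ => c)) :=
      eq_neg_of_add_eq_zero_left hbot
    have hBDinvD : B * D⁻¹ * D = B := by
      rw [Matrix.mul_assoc, hDinv', Matrix.mul_one]
    have hkey : (B * D⁻¹ * C) *ᵥ (fun _ => c) = -(B *ᵥ fun _ => c) := by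
      rw [← mulVec_mulVec, hCc, mulVec_neg, mulVec_mulVec, hBDinvD]
    rw [hschur, sub_mulVec, hkey, sub_neg_eq_add]
    exact htop
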